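/- arXiv:2211.12230 — 2 statements merged into one kernel-verified Lean document; each statement's English description precedes it below -/
import Mathlib

section
/- Let n ∈ ℕ, N = 2^n, G = F^{⊗n}, let H be an N×N matrix over 𝔽₂, and let 𝒜ᶜ ⊆ {0,…,N−1}. Suppose u ∈ 𝔽₂^N satisfies u·H = 0 and set x = u·G. Then for every i ∈ {0,…,N−1}: u_0^{i−1}·H_{0:i−1, ℒ_i} + x·Q^{(i)} = 0 over 𝔽₂, where u_0^{i−1} = (u_0,…,u_{i−1}) and Q^{(i)} = G_{*, i:N−1}·H_{i:N−1, ℒ_i}. -/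
open Matrix Finset

/-- The 2×2 polarization kernel `F = [[1,0],[1,1]]` over `𝔽₂`. -/
def polarF : Matrix (Fin 2) (Fin 2) (ZMod 2) := !![1, 0; 1, 1]

/-- The `n`-th Kronecker power `F^{⊗n}` of the polarization kernel, a `2^n × 2^n`
matrix over `𝔽₂`. -/
def kronPow : (n : ℕ) → Matrix (Fin (2 ^ n)) (Fin (2 ^ n)) (ZMod 2)
  | 0 => 1
  | n + 1 =>
      Matrix.reindex (finProdFinEquiv.trans (finCongr (by ring)))
        (finProdFinEquiv.trans (finCongr (by ring)))
        (Matrix.kroneckerMap (· * ·) polarF (kronPow n))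

lemma polarF_sq : polarF * polarF = 1 := by
  decide

lemma kronPow_sq (n : ℕ) : kronPow n * kronPow n = 1 := by
  induction n with
  | zero => simp [kronPow]
  | succ n ih =>
      simp only [kronPow, Matrix.reindex_apply]
      rw [Matrix.submatrix_mul_equiv,
        ← Matrix.mul_kronecker_mul, polarF_sq, ih, Matrix.one_kronecker_one,
        Matrix.submatrix_one_equiv]

lemma xG_eq_u (n : ℕ) (u : Fin (2 ^ n) → ZMod 2) :
    Matrix.vecMul (Matrix.vecMul u (kronPow n)) (kronPow n) = u := by
  rw [Matrix.vecMul_vecMul, kronPow_sq, Matrix.vecMul_one]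

/-- **Theorem 2 (full FC conversion).**  Let `N = 2^n`, `G = F^{⊗n}`, let `H` be
an `N × N` matrix over `𝔽₂`, and let `Ac ⊆ {0,…,N−1}` be the constrained
positions.  If `u·H = 0` and `x = u·G`, then for every `i` and every future
constraint index `j ∈ ℒ_i = {k ∈ Ac : k ≥ i}` we have
`(u_0^{i−1}·H_{0:i−1,ℒ_i})_j + (x·Q^{(i)})_j = 0`, where
`Q^{(i)} = G_{*,i:N−1}·H_{i:N−1,ℒ_i}`; entrywise, the `j`-th coordinate reads
`Σ_{k<i} u_k·H_{k,j} + Σ_m x_m · (Σ_{k≥i} G_{m,k}·H_{k,j}) = 0`. -/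
theorem full_FC_conversion (n : ℕ) (H : Matrix (Fin (2 ^ n)) (Fin (2 ^ n)) (ZMod 2))
    (Ac : Finset (Fin (2 ^ n)))
    (u : Fin (2 ^ n) → ZMod 2) (hu : Matrix.vecMul u H = 0)
    (x : Fin (2 ^ n) → ZMod 2) (hx : x = Matrix.vecMul u (kronPow n)) :
    ∀ i : Fin (2 ^ n), ∀ j ∈ Ac, (i : ℕ) ≤ (j : ℕ) →
      (∑ k ∈ Finset.univ.filter (fun k : Fin (2 ^ n) => (k : ℕ) < (i : ℕ)), u k * H k j)
        + (∑ m : Fin (2 ^ n), x m *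
            ∑ k ∈ Finset.univ.filter (fun k : Fin (2 ^ n) => (i : ℕ) ≤ (k : ℕ)),
              kronPow n m k * H k j) = 0 := by
  intro i j _ _
  have hxg : ∀ k, (∑ m : Fin (2 ^ n), x m * kronPow n m k) = u k := by
    intro k
    have := congrFun (xG_eq_u n u) k
    rw [← hx] at this
    simpa [Matrix.vecMul, dotProduct] using this
  have h2 : (∑ m : Fin (2 ^ n), x m *
      ∑ k ∈ Finset.univ.filter (fun k : Fin (2 ^ n) => (i : ℕ) ≤ (k : ℕ)),
        kronPow n m k * H k j)
      = ∑ k ∈ Finset.univ.filter (fun k : Fin (2 ^ n) => (i : ℕ) ≤ (k : ℕ)), u k * H k j := by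
    calc (∑ m : Fin (2 ^ n), x m *
        ∑ k ∈ Finset.univ.filter (fun k : Fin (2 ^ n) => (i : ℕ) ≤ (k : ℕ)),
          kronPow n m k * H k j)
        = ∑ m : Fin (2 ^ n),
            ∑ k ∈ Finset.univ.filter (fun k : Fin (2 ^ n) => (i : ℕ) ≤ (k : ℕ)),
              x m * kronPow n m k * H k j := by
          simp [Finset.mul_sum, mul_assoc]
      _ = ∑ k ∈ Finset.univ.filter (fun k : Fin (2 ^ n) => (i : ℕ) ≤ (k : ℕ)),
            ∑ m : Fin (2 ^ n), x m * kronPow n m k * H k j := Finset.sum_comm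
      _ = _ := by
          refine Finset.sum_congr rfl fun k _ => ?_
          rw [← Finset.sum_mul, hxg k]
  calc (∑ k ∈ Finset.univ.filter (fun k : Fin (2 ^ n) => (k : ℕ) < (i : ℕ)), u k * H k j)
        + _ = ∑ k : Fin (2 ^ n), u k * H k j := by
          rw [h2, ← Finset.sum_filter_add_sum_filter_not Finset.univ
            (fun k : Fin (2 ^ n) => (k : ℕ) < (i : ℕ))]
          congr 1
          apply Finset.sum_congr _ fun _ _ => rfl
          ext k; simp [not_lt]
    _ = Matrix.vecMul u H j := by simp [Matrix.vecMul, dotProduct]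
    _ = 0 := by rw [hu]; rfl
end

section
/- Let N ∈ ℕ and let 𝒜, ℱ, 𝒫 be pairwise disjoint sets with 𝒜 ∪ ℱ ∪ 𝒫 = {0,…,N−1}. Let T be an N×N matrix over 𝔽₂ such that: (a) row k of T is the zero vector for every k ∉ 𝒜; (b) for i ∈ 𝒜, column i of T is the standard basis vector e_i (T_{i,i} = 1 and T_{k,i} = 0 for k ≠ i); (c) for i ∈ ℱ, column i of T is zero; (d) for i ∈ 𝒫, T_{k,i} = 0 for all k ≥ i. Define the N×N matrix H over 𝔽₂ by: column i of H is zero for i ∈ 𝒜; column i of H is e_i for i ∈ ℱ; and for i ∈ 𝒫, H_{k,i} = T_{k,i} for k < i, H_{i,i} = 1, and H_{k,i} = 0 for k > i. Then T·H = 0; consequently every precoded word u = v·T with v ∈ 𝔽₂^N satisfies u·H = 0. -/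
open Matrix Finset

/-- **Parity-check matrix on the encoder input (`T·H = 0`).**
Let `𝒜, ℱ, 𝒫` be pairwise disjoint sets partitioning `{0,…,N−1}` (information,
frozen and parity positions).  Let `T` be the `N × N` precoding matrix over `𝔽₂`:
(a) row `k` of `T` is zero for `k ∉ 𝒜`; (b) for `i ∈ 𝒜`, column `i` of `T` is the
standard basis vector `e_i`; (c) for `i ∈ ℱ`, column `i` of `T` is zero;
(d) for `i ∈ 𝒫`, `T_{k,i} = 0` for all `k ≥ i` (causal parity generation).
Define the parity-check matrix `H` by: column `i` of `H` is zero for `i ∈ 𝒜`,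
equals `e_i` for `i ∈ ℱ`, and for `i ∈ 𝒫` satisfies `H_{k,i} = T_{k,i}` for
`k < i`, `H_{i,i} = 1`, `H_{k,i} = 0` for `k > i`.
Then `T·H = 0`; consequently every precoded word `u = v·T` satisfies `u·H = 0`. -/
theorem precode_parityCheck (N : ℕ) (A Fr P : Finset (Fin N))
    (hAF : Disjoint A Fr) (hAP : Disjoint A P) (hFP : Disjoint Fr P)
    (hunion : A ∪ Fr ∪ P = Finset.univ)
    (T H : Matrix (Fin N) (Fin N) (ZMod 2))
    (hTrow : ∀ k : Fin N, k ∉ A → ∀ j : Fin N, T k j = 0)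
    (hTA : ∀ i ∈ A, T i i = 1 ∧ ∀ k : Fin N, k ≠ i → T k i = 0)
    (hTF : ∀ i ∈ Fr, ∀ k : Fin N, T k i = 0)
    (hTP : ∀ i ∈ P, ∀ k : Fin N, (i : ℕ) ≤ (k : ℕ) → T k i = 0)
    (hHA : ∀ i ∈ A, ∀ k : Fin N, H k i = 0)
    (hHF : ∀ i ∈ Fr, H i i = 1 ∧ ∀ k : Fin N, k ≠ i → H k i = 0)
    (hHP : ∀ i ∈ P, (∀ k : Fin N, (k : ℕ) < (i : ℕ) → H k i = T k i) ∧ H i i = 1 ∧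
        ∀ k : Fin N, (i : ℕ) < (k : ℕ) → H k i = 0) :
    T * H = 0 ∧
      ∀ v : Fin N → ZMod 2, Matrix.vecMul (Matrix.vecMul v T) H = 0 := by
  have key : T * H = 0 := by
    ext k i
    simp only [Matrix.mul_apply, Matrix.zero_apply]
    have hi : i ∈ A ∪ Fr ∪ P := by rw [hunion]; exact Finset.mem_univ i
    rcases Finset.mem_union.1 hi with hi' | hiP
    · rcases Finset.mem_union.1 hi' with hiA | hiF
      · -- column i of H is zero
        simp [hHA i hiA]
      · -- column i of H is e_i
        have : ∀ j : Fin N, T k j * H j i = if j = i then T k i else 0 := by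
          intro j
          by_cases hj : j = i
          · subst hj; simp [(hHF j hiF).1]
          · simp [hj, (hHF i hiF).2 j hj]
        rw [Finset.sum_congr rfl fun j _ => this j, Finset.sum_ite_eq' _ i,
          if_pos (Finset.mem_univ i)]
        exact hTF i hiF k
    · -- i ∈ P
      obtain ⟨hH1, hH2, hH3⟩ := hHP i hiP
      have term : ∀ j : Fin N, T k j * H j i =
          (if j = i then T k i else 0) +
          (if j = k ∧ (k : ℕ) < (i : ℕ) then T k i else 0) := by
        intro j
        by_cases hji : j = i
        · subst hji
          have h' : ¬ (j = k ∧ (k : ℕ) < (j : ℕ)) := by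
            rintro ⟨rfl, h⟩; omega
          rw [hH2, mul_one, if_pos rfl, if_neg h', add_zero]
        · rw [if_neg hji]
          rcases lt_trichotomy (j : ℕ) (i : ℕ) with hlt | heq | hgt
          · rw [hH1 j hlt]
            by_cases hjA : j ∈ A
            · by_cases hjk : j = k
              · subst hjk
                by_cases hk : (j : ℕ) < (i : ℕ)
                · rw [if_pos ⟨rfl, hk⟩]
                  by_cases hkA : j ∈ A
                  · rw [(hTA j hkA).1, one_mul, zero_add]
                  · rw [hTrow j hkA i, hTrow j hkA j, zero_mul, zero_add]
                · omega
              · rw [(hTA j hjA).2 k (fun h => hjk h.symm), zero_mul,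
                  if_neg (fun h => hjk h.1), zero_add]
            · rw [hTrow j hjA i, mul_zero]
              by_cases hc : j = k ∧ (k : ℕ) < (i : ℕ)
              · rw [if_pos hc, hTrow k (hc.1 ▸ hjA) i, zero_add]
              · rw [if_neg hc, zero_add]
          · exact absurd (Fin.ext heq) hji
          · rw [hH3 j hgt, mul_zero]
            have : ¬ (j = k ∧ (k : ℕ) < (i : ℕ)) := by
              rintro ⟨rfl, h⟩; omega
            rw [if_neg this, zero_add]
      rw [Finset.sum_congr rfl fun j _ => term j, Finset.sum_add_distrib,
        Finset.sum_ite_eq' _ i, if_pos (Finset.mem_univ i)]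
      have : (∑ j : Fin N, if j = k ∧ (k : ℕ) < (i : ℕ) then T k i else 0) =
          if (k : ℕ) < (i : ℕ) then T k i else 0 := by
        by_cases hk : (k : ℕ) < (i : ℕ)
        · simp [hk, Finset.sum_ite_eq' _ k]
        · simp [hk]
      rw [this]
      by_cases hk : (k : ℕ) < (i : ℕ)
      · rw [if_pos hk]
        have : (2 : ZMod 2) = 0 := rfl
        ring_nf
        rw [this, mul_zero]
      · rw [if_neg hk, hTP i hiP k (by omega), add_zero]
  refine ⟨key, fun v => ?_⟩
  rw [Matrix.vecMul_vecMul, key, Matrix.vecMul_zero]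
end
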